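/- Let k ≥ 6 be an integer with k ≡ 2 (mod 4) and let a = (k² + 3k − 2)/4. Then the graph G of order a(k−1) consisting of a copy of the complete graph K_{k(k−1)/2 + 1} together with isolated vertices has exactly (a − k + 1)·C(k,2) edges, is K_k-divisible, and has no proper colouring with a colours, where C(k,2) = k(k−1)/2. -/

import Mathlib

/-- A graph is `K_k`-divisible if `k(k-1)/2` divides its number of edges and `k-1`
divides every vertex degree. -/
def KkDivisible {V : Type*} (k : ℕ) (G : SimpleGraph V) : Prop :=
  (k * (k - 1) / 2) ∣ G.edgeSet.ncard ∧ ∀ x : V, (k - 1) ∣ (G.neighborSet x).ncard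

/-- The graph of order `a(k-1)` consisting of a copy of the complete graph
`K_{k(k-1)/2 + 1}` (on the vertices with value `< k(k-1)/2 + 1`) together with
isolated vertices. -/
def cliquePlusIsolated (k a : ℕ) : SimpleGraph (Fin (a * (k - 1))) :=
  SimpleGraph.fromRel (fun x y =>
    x.val < k * (k - 1) / 2 + 1 ∧ y.val < k * (k - 1) / 2 + 1)

open SimpleGraph Finset

lemma cpi_adj (k a : ℕ) (x y : Fin (a * (k - 1))) :
    (cliquePlusIsolated k a).Adj x y ↔
      x ≠ y ∧ x.val < k * (k - 1) / 2 + 1 ∧ y.val < k * (k - 1) / 2 + 1 := by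
  simp only [cliquePlusIsolated, SimpleGraph.fromRel_adj]
  tauto

instance cpiDecAdj (k a : ℕ) : DecidableRel (cliquePlusIsolated k a).Adj := fun x y =>
  decidable_of_iff _ (cpi_adj k a x y).symm

/-- For `k ≥ 6` with `k ≡ 2 (mod 4)` and `a = (k² + 3k - 2)/4`, the graph of order
`a(k-1)` consisting of `K_{k(k-1)/2+1}` plus isolated vertices has exactly
`(a - k + 1)·C(k,2)` edges, is `K_k`-divisible, but has no proper colouring with
`a` colours. -/
theorem cliquePlusIsolated_properties (k a : ℕ) (hk : 6 ≤ k) (hkmod : k % 4 = 2)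
    (ha : 4 * a = k ^ 2 + 3 * k - 2) :
    (cliquePlusIsolated k a).edgeSet.ncard = (a - k + 1) * (k * (k - 1) / 2) ∧
    KkDivisible k (cliquePlusIsolated k a) ∧
    ¬ ∃ φ : Fin (a * (k - 1)) → Fin a,
        ∀ x y, (cliquePlusIsolated k a).Adj x y → φ x ≠ φ y := by
  obtain ⟨t, rfl⟩ : ∃ t, k = 4 * t + 2 := ⟨k / 4, by omega⟩
  have ht : 1 ≤ t := by omega
  have hsq : (4 * t + 2) ^ 2 = 16 * t ^ 2 + 16 * t + 4 := by ring
  have ha2 : a = 4 * t ^ 2 + 7 * t + 2 := by omega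
  have hprod : (4 * t + 2) * ((4 * t + 2) - 1) = 2 * (8 * t ^ 2 + 6 * t + 1) := by
    have h1 : (4 * t + 2) - 1 = 4 * t + 1 := by omega
    rw [h1]; ring
  have hc : (4 * t + 2) * ((4 * t + 2) - 1) / 2 = 8 * t ^ 2 + 6 * t + 1 := by omega
  have hnval : a * ((4 * t + 2) - 1) = 16 * t ^ 3 + 32 * t ^ 2 + 15 * t + 2 := by
    have h1 : (4 * t + 2) - 1 = 4 * t + 1 := by omega
    rw [ha2, h1]; ring
  have hmn : 8 * t ^ 2 + 6 * t + 2 < a * ((4 * t + 2) - 1) := by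
    rw [hnval]; nlinarith
  set m : Fin (a * ((4 * t + 2) - 1)) := ⟨8 * t ^ 2 + 6 * t + 2, hmn⟩ with hm
  have hadj : ∀ x y : Fin (a * ((4 * t + 2) - 1)),
      (cliquePlusIsolated (4 * t + 2) a).Adj x y ↔
        x ≠ y ∧ x.val < m.val ∧ y.val < m.val := by
    intro x y
    rw [cpi_adj, hc]
  have hnbr : ∀ x : Fin (a * ((4 * t + 2) - 1)), x.val < m.val →
      (cliquePlusIsolated (4 * t + 2) a).neighborFinset x = (Finset.Iio m).erase x := by
    intro x hx
    ext y
    simp only [mem_neighborFinset, hadj, mem_erase, Finset.mem_Iio, Fin.lt_def]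
    constructor
    · rintro ⟨h1, _, h3⟩; exact ⟨h1.symm, h3⟩
    · rintro ⟨h1, h2⟩; exact ⟨Ne.symm h1, hx, h2⟩
  have hdeg : ∀ x : Fin (a * ((4 * t + 2) - 1)), (cliquePlusIsolated (4 * t + 2) a).degree x =
      if x.val < m.val then 8 * t ^ 2 + 6 * t + 1 else 0 := by
    intro x
    by_cases hx : x.val < m.val
    · rw [if_pos hx, SimpleGraph.degree, hnbr x hx,
        Finset.card_erase_of_mem (by simpa [Finset.mem_Iio] using hx),
        Fin.card_Iio]
      rfl
    · rw [if_neg hx, SimpleGraph.degree, Finset.card_eq_zero]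
      ext y
      simp only [mem_neighborFinset, hadj, Finset.notMem_empty, iff_false]
      rintro ⟨_, h2, _⟩; exact hx h2
  have hsum : ∑ v, (cliquePlusIsolated (4 * t + 2) a).degree v =
      (8 * t ^ 2 + 6 * t + 2) * (8 * t ^ 2 + 6 * t + 1) := by
    calc ∑ v, (cliquePlusIsolated (4 * t + 2) a).degree v
        = ∑ v : Fin (a * ((4 * t + 2) - 1)),
            if v.val < m.val then 8 * t ^ 2 + 6 * t + 1 else 0 :=
          Finset.sum_congr rfl fun v _ => hdeg v
      _ = ∑ v ∈ Finset.filter (fun v : Fin (a * ((4 * t + 2) - 1)) => v.val < m.val) univ,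
            (8 * t ^ 2 + 6 * t + 1) := (Finset.sum_filter _ _).symm
      _ = (Finset.filter (fun v : Fin (a * ((4 * t + 2) - 1)) => v.val < m.val) univ).card *
            (8 * t ^ 2 + 6 * t + 1) := by rw [Finset.sum_const, smul_eq_mul]
      _ = (8 * t ^ 2 + 6 * t + 2) * (8 * t ^ 2 + 6 * t + 1) := by
          congr 1
          have : Finset.filter (fun v : Fin (a * ((4 * t + 2) - 1)) => v.val < m.val) univ
              = Finset.Iio m := by
            ext y; simp [Finset.mem_Iio]
          rw [this, Fin.card_Iio]
  have hedge2 : 2 * (cliquePlusIsolated (4 * t + 2) a).edgeFinset.card =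
      (8 * t ^ 2 + 6 * t + 2) * (8 * t ^ 2 + 6 * t + 1) := by
    rw [← SimpleGraph.sum_degrees_eq_twice_card_edges, hsum]
  have hfact : (8 * t ^ 2 + 6 * t + 2) * (8 * t ^ 2 + 6 * t + 1) =
      2 * ((4 * t ^ 2 + 3 * t + 1) * (8 * t ^ 2 + 6 * t + 1)) := by ring
  have hedgecard : (cliquePlusIsolated (4 * t + 2) a).edgeFinset.card =
      (4 * t ^ 2 + 3 * t + 1) * (8 * t ^ 2 + 6 * t + 1) := by omega
  have hncard : (cliquePlusIsolated (4 * t + 2) a).edgeSet.ncard =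
      (cliquePlusIsolated (4 * t + 2) a).edgeFinset.card := by
    rw [Set.ncard_eq_toFinset_card', SimpleGraph.edgeFinset, Set.toFinset_card]
  have hamk : a - (4 * t + 2) + 1 = 4 * t ^ 2 + 3 * t + 1 := by omega
  refine ⟨?_, ⟨?_, ?_⟩, ?_⟩
  · rw [hncard, hedgecard, hamk, hc]
  · rw [hncard, hedgecard, hc]
    exact dvd_mul_left _ _
  · intro x
    have hns : ((cliquePlusIsolated (4 * t + 2) a).neighborSet x).ncard =
        (cliquePlusIsolated (4 * t + 2) a).degree x := by
      rw [Set.ncard_eq_toFinset_card', SimpleGraph.degree, SimpleGraph.neighborFinset,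
        Set.toFinset_card]
    rw [hns, hdeg x]
    by_cases hx : x.val < m.val
    · rw [if_pos hx]
      have h1 : (4 * t + 2) - 1 = 4 * t + 1 := by omega
      rw [h1]
      exact ⟨2 * t + 1, by ring⟩
    · rw [if_neg hx]; exact dvd_zero _
  · rintro ⟨φ, hφ⟩
    have hinj : Function.Injective
        (fun i : Fin (8 * t ^ 2 + 6 * t + 2) => φ ⟨i.val, lt_trans i.isLt hmn⟩) := by
      intro i j hij
      by_contra hne
      have hne' : (⟨i.val, lt_trans i.isLt hmn⟩ : Fin (a * ((4 * t + 2) - 1))) ≠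
          ⟨j.val, lt_trans j.isLt hmn⟩ := by
        simp only [ne_eq, Fin.mk.injEq]
        exact fun h => hne (Fin.ext h)
      exact hφ _ _ ((hadj _ _).mpr ⟨hne', i.isLt, j.isLt⟩) hij
    have hle := Fintype.card_le_of_injective _ hinj
    simp only [Fintype.card_fin] at hle
    rw [ha2] at hle
    nlinarith
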